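/- Let κ be an inaccessible cardinal. Then the Lévy collapse Col(ω,<κ) has the κ-chain condition; consequently every maximal antichain A of Col(ω,<κ) is contained in Col(ω,<α) for some α < κ. -/

import Mathlib

/-- Conditions of the Lévy collapse `Col(ω,<κ)`: finite partial functions
`p : ω × κ ⇀ κ` with `p(n,α) < α` whenever defined, coded as finite functional sets of
triples `(n, α, β)` meaning `p(n,α) = β`.  The ordering is reverse inclusion, so `q` extends
`p` iff `p.1 ⊆ q.1`. -/
def LevyCond (κ : Ordinal.{0}) : Type 1 :=
  {p : Set (ℕ × Ordinal × Ordinal) //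
    p.Finite ∧ (∀ t ∈ p, t.2.2 < t.2.1 ∧ t.2.1 < κ) ∧
      ∀ t ∈ p, ∀ t' ∈ p, t.1 = t'.1 → t.2.1 = t'.2.1 → t = t'}

/-- Two Lévy collapse conditions are compatible iff they have a common extension. -/
def LevyCompat {κ : Ordinal.{0}} (p q : LevyCond κ) : Prop :=
  ∃ r : LevyCond κ, p.1 ⊆ r.1 ∧ q.1 ⊆ r.1

open Cardinal Set


universe u

lemma auxDelta {α : Type u} {c : Cardinal.{u}} (hreg : c.IsRegular) (hω : ℵ₀ < c) :
    ∀ (n : ℕ) (S : Set (Set α)), (∀ s ∈ S, s.Finite ∧ s.ncard ≤ n) → c ≤ #S →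
    ∃ (R : Set α) (T : Set (Set α)), T ⊆ S ∧ c ≤ #T ∧
      ∀ s ∈ T, ∀ t ∈ T, s ≠ t → s ∩ t = R := by
  intro n
  induction n with
  | zero =>
    intro S hS hcS
    exfalso
    have hsub : S ⊆ {∅} := by
      intro s hs
      have h := hS s hs
      have : s = ∅ := (Set.ncard_eq_zero h.1).1 (le_antisymm h.2 (Nat.zero_le _))
      simpa using this
    have h1 : #↥S ≤ 1 := by
      calc #↥S ≤ #↥({∅} : Set (Set α)) := mk_le_mk_of_subset hsub
      _ = 1 := mk_singleton _
    exact absurd (hcS.trans h1) (not_le.2 (lt_trans one_lt_aleph0 hω))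
  | succ n ih =>
    intro S hS hcS
    by_cases h : ∃ a, c ≤ #{s ∈ S | a ∈ s}
    · obtain ⟨a, ha⟩ := h
      have hins : ∀ s ∈ {s ∈ S | a ∈ s}, insert a (s \ {a}) = s := by
        intro s hs
        rw [Set.insert_diff_singleton]
        exact Set.insert_eq_self.2 hs.2
      have hinj : Set.InjOn (fun s => s \ {a}) {s ∈ S | a ∈ s} := by
        intro s hs t ht hst
        rw [← hins s hs, ← hins t ht]
        simp only at hst
        rw [hst]
      have hmk : c ≤ #((fun s => s \ {a}) '' {s ∈ S | a ∈ s}) := by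
        rw [Cardinal.mk_image_eq_of_injOn _ _ hinj]; exact ha
      have hsizes : ∀ s ∈ (fun s => s \ {a}) '' {s ∈ S | a ∈ s},
          s.Finite ∧ s.ncard ≤ n := by
        rintro _ ⟨s, hs, rfl⟩
        dsimp only
        have h1 := hS s hs.1
        refine ⟨h1.1.diff, ?_⟩
        have h2 := Set.ncard_diff_singleton_add_one hs.2 h1.1
        omega
      obtain ⟨R', T', hT'sub, hT'card, hT'root⟩ := ih _ hsizes hmk
      have hnotmem : ∀ t ∈ T', a ∉ t := by
        intro t ht
        obtain ⟨s, _, rfl⟩ := hT'sub ht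
        simp
      refine ⟨insert a R', (fun t => insert a t) '' T', ?_, ?_, ?_⟩
      · rintro _ ⟨t, ht, rfl⟩
        obtain ⟨s, hs, rfl⟩ := hT'sub ht
        dsimp only
        rw [hins s hs]
        exact hs.1
      · rw [Cardinal.mk_image_eq_of_injOn]
        · exact hT'card
        · intro t ht t' ht' h
          simp only at h
          rw [← Set.insert_diff_self_of_notMem (hnotmem t ht),
            ← Set.insert_diff_self_of_notMem (hnotmem t' ht'), h]
      · rintro _ ⟨t, ht, rfl⟩ _ ⟨t', ht', rfl⟩ hne
        have ht2 : t ≠ t' := by rintro rfl; exact hne rfl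
        have : insert a t ∩ insert a t' = insert a (t ∩ t') := by
          ext x
          simp only [Set.mem_inter_iff, Set.mem_insert_iff]
          tauto
        rw [this, hT'root t ht t' ht' ht2]
    · push_neg at h
      set S₀ := S \ {∅} with hS₀def
      have hS₀ : c ≤ #S₀ := by
        by_contra h0
        push_neg at h0
        have hsub : S ⊆ S₀ ∪ {∅} := by
          intro s hs
          by_cases hse : s = ∅
          · exact Or.inr (by simpa using hse)
          · exact Or.inl ⟨hs, by simpa using hse⟩
        have h1 : #↥S ≤ #↥S₀ + 1 := by
          calc #↥S ≤ #↥(S₀ ∪ {∅}) := mk_le_mk_of_subset hsub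
          _ ≤ #↥S₀ + #↥({∅} : Set (Set α)) := mk_union_le _ _
          _ = #↥S₀ + 1 := by rw [mk_singleton]
        exact absurd hcS (not_le.2 (lt_of_le_of_lt h1
          (add_lt_of_lt hω.le h0 (one_lt_aleph0.trans hω))))
      have hzorn : ∀ C ⊆ {D : Set (Set α) | D ⊆ S₀ ∧ ∀ s ∈ D, ∀ t ∈ D, s ≠ t → s ∩ t = ∅},
          IsChain (· ⊆ ·) C → ∃ ub ∈ {D : Set (Set α) | D ⊆ S₀ ∧
            ∀ s ∈ D, ∀ t ∈ D, s ≠ t → s ∩ t = ∅}, ∀ s ∈ C, s ⊆ ub := by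
        intro C hC hchain
        refine ⟨⋃₀ C, ⟨Set.sUnion_subset fun E hE => (hC hE).1, ?_⟩,
          fun s hs => Set.subset_sUnion_of_mem hs⟩
        intro s hs t ht hne
        obtain ⟨D₁, hD₁, hs1⟩ := hs
        obtain ⟨D₂, hD₂, ht2⟩ := ht
        rcases eq_or_ne D₁ D₂ with rfl | hD12
        · exact (hC hD₁).2 s hs1 t ht2 hne
        · rcases hchain hD₁ hD₂ hD12 with hle | hle
          · exact (hC hD₂).2 s (hle hs1) t ht2 hne
          · exact (hC hD₁).2 s hs1 t (hle ht2) hne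
      obtain ⟨D, hD⟩ := zorn_subset
          {D : Set (Set α) | D ⊆ S₀ ∧ ∀ s ∈ D, ∀ t ∈ D, s ≠ t → s ∩ t = ∅} hzorn
      by_cases hDc : c ≤ #D
      · exact ⟨∅, D, fun s hs => (hD.1.1 hs).1, hDc, hD.1.2⟩
      · exfalso
        push_neg at hDc
        have hmeet : ∀ s ∈ S₀, ∃ d ∈ D, (s ∩ d).Nonempty := by
          intro s hs
          by_contra hno
          push_neg at hno
          have hinsP : insert s D ∈
              {D : Set (Set α) | D ⊆ S₀ ∧ ∀ s ∈ D, ∀ t ∈ D, s ≠ t → s ∩ t = ∅} := by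
            refine ⟨Set.insert_subset hs hD.1.1, ?_⟩
            intro u hu v hv hne
            rcases hu with rfl | hu
            · rcases hv with rfl | hv
              · exact absurd rfl hne
              · exact hno v hv
            · rcases hv with rfl | hv
              · rw [Set.inter_comm]; exact hno u hu
              · exact hD.1.2 u hu v hv hne
          have hsD : s ∈ D := hD.2 hinsP (Set.subset_insert s D) (Set.mem_insert s D)
          have : s ∩ s = ∅ := hno s hsD
          rw [Set.inter_self] at this
          exact absurd this (by simpa [Set.mem_singleton_iff] using hs.2)
        have hubig : #↥(⋃₀ D) < c := by
          rw [Set.sUnion_eq_biUnion]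
          rw [card_biUnion_lt_iff_forall_of_isRegular hreg hDc]
          intro d hd
          exact ((hS d (hD.1.1 hd).1).1.lt_aleph0).trans hω
        have hcover : S₀ ⊆ ⋃ a ∈ ⋃₀ D, {s ∈ S | a ∈ s} := by
          intro s hs
          obtain ⟨d, hd, x, hx⟩ := hmeet s hs
          exact Set.mem_biUnion ⟨d, hd, hx.2⟩ ⟨hs.1, hx.1⟩
        have : #↥S₀ < c := by
          refine lt_of_le_of_lt (mk_le_mk_of_subset hcover) ?_
          rw [card_biUnion_lt_iff_forall_of_isRegular hreg hubig]
          intro x _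
          exact h x
        exact absurd hS₀ (not_le.2 this)


lemma auxCount {c : Cardinal.{1}} (hω : ℵ₀ < c) (hsl : ∀ x < c, (2 : Cardinal.{1}) ^ x < c)
    {D : Set (ℕ × Ordinal.{0})} (hD : D.Finite) {α₀ : Ordinal.{0}}
    (hα : Cardinal.lift.{1} α₀.card < c) :
    #{p : Set (ℕ × Ordinal.{0} × Ordinal.{0}) |
        ∀ t ∈ p, (t.1, t.2.1) ∈ D ∧ t.2.2 < α₀} < c := by
  set f := fun (p : ↥{p : Set (ℕ × Ordinal.{0} × Ordinal.{0}) |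
      ∀ t ∈ p, (t.1, t.2.1) ∈ D ∧ t.2.2 < α₀}) =>
    ({q : ↥D × ↥(Set.Iio α₀) | (q.1.1.1, q.1.1.2, q.2.1) ∈ p.1} :
      Set (↥D × ↥(Set.Iio α₀))) with hf
  have key : ∀ p q, f p = f q → p.1 ⊆ q.1 := by
    intro p q h t ht
    have h1 := p.2 t ht
    have hm : (⟨⟨(t.1, t.2.1), h1.1⟩, ⟨t.2.2, h1.2⟩⟩ : ↥D × ↥(Set.Iio α₀)) ∈ f p := by
      simp only [hf, Set.mem_setOf_eq]
      simpa using ht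
    rw [h] at hm
    simp only [hf, Set.mem_setOf_eq] at hm
    simpa using hm
  have hinj : Function.Injective f := fun p q h =>
    Subtype.ext (Set.Subset.antisymm (key p q h) (key q p h.symm))
  calc #{p : Set (ℕ × Ordinal.{0} × Ordinal.{0}) | ∀ t ∈ p, (t.1, t.2.1) ∈ D ∧ t.2.2 < α₀}
      ≤ #(Set (↥D × ↥(Set.Iio α₀))) := Cardinal.mk_le_of_injective hinj
    _ = 2 ^ #(↥D × ↥(Set.Iio α₀)) := Cardinal.mk_set
    _ < c := by
        apply hsl
        rw [Cardinal.mk_prod, Cardinal.lift_id, Cardinal.lift_id]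
        apply Cardinal.mul_lt_of_lt hω.le (hD.lt_aleph0.trans hω)
        rwa [Ordinal.mk_Iio_ordinal]

lemma auxBound {s : Set Ordinal.{0}} (hs : s.Finite) {o : Ordinal.{0}} (ho : Order.IsSuccLimit o)
    (h : ∀ x ∈ s, x < o) : ∃ a < o, ∀ x ∈ s, x < a := by
  rcases s.eq_empty_or_nonempty with rfl | hne
  · exact ⟨0, ho.pos, by simp⟩
  · have hmem := hne.csSup_mem hs
    refine ⟨Order.succ (sSup s), ho.succ_lt (h _ hmem), fun x hx => ?_⟩
    exact (le_csSup hs.bddAbove hx).trans_lt (Order.lt_succ _)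

/-- If `κ` is (strongly) inaccessible then the Lévy collapse `Col(ω,<κ)` has
the `κ`-chain condition: every antichain has size `< κ`.  Consequently every maximal
antichain `A` is contained in `Col(ω,<α)` for some `α < κ`, i.e. all ordinals appearing in
the domains of conditions in `A` are bounded by some `α < κ`. -/
theorem levy_collapse_kappa_cc (κ : Cardinal.{0}) (hκ : κ.IsInaccessible) :
    (∀ A : Set (LevyCond κ.ord),
      (∀ p ∈ A, ∀ q ∈ A, p ≠ q → ¬ LevyCompat p q) →
        Cardinal.mk A < Cardinal.lift.{1,0} κ) ∧
    (∀ A : Set (LevyCond κ.ord),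
      (∀ p ∈ A, ∀ q ∈ A, p ≠ q → ¬ LevyCompat p q) →
      (∀ p : LevyCond κ.ord, ∃ q ∈ A, LevyCompat p q) →
        ∃ α < κ.ord, ∀ p ∈ A, ∀ t ∈ p.1, t.2.1 < α) := by
  obtain ⟨hω0, hreg0, hsl0⟩ := Cardinal.isInaccessible_def.1 hκ
  set c : Cardinal.{1} := Cardinal.lift.{1} κ with hcdef
  have hω : ℵ₀ < c := by
    rw [hcdef, ← Cardinal.lift_aleph0.{1,0}]
    exact Cardinal.lift_lt.2 hω0
  have hcof : c.ord.cof = c := by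
    rw [hcdef, ← Cardinal.lift_ord, ← Ordinal.lift_cof, hreg0.cof_eq]
  have hreg : c.IsRegular := ⟨hω.le, hcof.ge⟩
  have hsl : ∀ x < c, (2 : Cardinal.{1}) ^ x < c := by
    intro x hx
    rw [hcdef] at hx
    obtain ⟨x', hx', rfl⟩ := Cardinal.lt_lift_iff.1 hx
    rw [hcdef, ← Cardinal.lift_two.{1,0}, ← Cardinal.lift_power]
    exact Cardinal.lift_lt.2 (hsl0.two_power_lt hx')
  have hord : Order.IsSuccLimit κ.ord := Cardinal.isSuccLimit_ord hreg0.1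
  set dom : LevyCond κ.ord → Set (ℕ × Ordinal.{0}) :=
    fun p => (fun t => (t.1, t.2.1)) '' p.1 with hdomdef
  have hdomfin : ∀ p : LevyCond κ.ord, (dom p).Finite := fun p => p.2.1.image _
  have hdomlt : ∀ p : LevyCond κ.ord, ∀ x ∈ dom p, x.2 < κ.ord := by
    rintro p _ ⟨t, ht, rfl⟩
    exact (p.2.2.1 t ht).2
  have part1 : ∀ A : Set (LevyCond κ.ord),
      (∀ p ∈ A, ∀ q ∈ A, p ≠ q → ¬ LevyCompat p q) → Cardinal.mk A < c := by
    intro A hA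
    by_contra hbig
    push_neg at hbig
    -- fiber bound
    have hfiber : ∀ D : Set (ℕ × Ordinal.{0}), D.Finite → (∀ x ∈ D, x.2 < κ.ord) →
        #{p : LevyCond κ.ord | p ∈ A ∧ dom p = D} < c := by
      intro D hDfin hDlt
      obtain ⟨α₀, hα₀, hbound⟩ := auxBound (hDfin.image Prod.snd) hord
        (by rintro _ ⟨x, hx, rfl⟩; exact hDlt x hx)
      have hα : Cardinal.lift.{1} α₀.card < c := by
        rw [hcdef]; exact Cardinal.lift_lt.2 (Cardinal.lt_ord.1 hα₀)
      refine lt_of_le_of_lt ?_ (auxCount hω hsl hDfin hα)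
      have hmap : ∀ p : ↥{p : LevyCond κ.ord | p ∈ A ∧ dom p = D},
          p.1.1 ∈ {q : Set (ℕ × Ordinal.{0} × Ordinal.{0}) |
            ∀ t ∈ q, (t.1, t.2.1) ∈ D ∧ t.2.2 < α₀} := by
        intro p t ht
        have hdm : (t.1, t.2.1) ∈ D := by
          rw [← p.2.2]; exact ⟨t, ht, rfl⟩
        refine ⟨hdm, ?_⟩
        have h1 := p.1.2.2.1 t ht
        exact h1.1.trans (hbound t.2.1 ⟨(t.1, t.2.1), hdm, rfl⟩)
      refine Cardinal.mk_le_of_injective (f := fun p => ⟨p.1.1, hmap p⟩) ?_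
      intro p q h
      simp only [Subtype.mk.injEq] at h
      exact Subtype.ext (Subtype.ext h)
    -- image of dom is big
    have hDbig : c ≤ #↥(dom '' A) := by
      by_contra hsmall
      push_neg at hsmall
      have hcov : A ⊆ ⋃ D ∈ dom '' A, {p : LevyCond κ.ord | p ∈ A ∧ dom p = D} :=
        fun p hp => Set.mem_biUnion ⟨p, hp, rfl⟩ ⟨hp, rfl⟩
      have : #↥A < c := by
        refine lt_of_le_of_lt (mk_le_mk_of_subset hcov) ?_
        rw [card_biUnion_lt_iff_forall_of_isRegular hreg hsmall]
        rintro _ ⟨p₀, _, rfl⟩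
        exact hfiber _ (hdomfin p₀) (hdomlt p₀)
      exact absurd hbig (not_le.2 this)
    -- pigeonhole on ncard
    have hn : ∃ n : ℕ, c ≤ #{D ∈ dom '' A | D.ncard = n} := by
      by_contra hno
      push_neg at hno
      have hcov : dom '' A ⊆ ⋃ (n : ULift.{1} ℕ), {D ∈ dom '' A | D.ncard = n.down} :=
        fun D hD => Set.mem_iUnion.2 ⟨⟨D.ncard⟩, hD, rfl⟩
      have hℕ : #(ULift.{1} ℕ) < c := by
        have : #(ULift.{1} ℕ) = ℵ₀ := by simp
        rw [this]; exact hω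
      have : #↥(dom '' A) < c := by
        refine lt_of_le_of_lt (mk_le_mk_of_subset hcov) ?_
        rw [card_iUnion_lt_iff_forall_of_isRegular hreg hℕ]
        exact fun n => hno n.down
      exact absurd hDbig (not_le.2 this)
    obtain ⟨n, hn⟩ := hn
    have hsizes : ∀ D ∈ {D ∈ dom '' A | D.ncard = n}, D.Finite ∧ D.ncard ≤ n := by
      rintro D ⟨⟨p₀, _, rfl⟩, hcard⟩
      exact ⟨hdomfin p₀, le_of_eq hcard⟩
    obtain ⟨R, T, hTsub, hTcard, hroot⟩ := auxDelta hreg hω n _ hsizes hn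
    -- two distinct elements
    obtain ⟨D₁, hD₁, D₂, hD₂, hne12⟩ : ∃ D₁ ∈ T, ∃ D₂ ∈ T, D₁ ≠ D₂ := by
      have h1 : 1 < #↥T := lt_of_lt_of_le (one_lt_aleph0.trans hω) hTcard
      rw [Cardinal.one_lt_iff_nontrivial] at h1
      obtain ⟨⟨E₁, h₁⟩, ⟨E₂, h₂⟩, hne⟩ := h1
      exact ⟨E₁, h₁, E₂, h₂, fun h => hne (Subtype.ext h)⟩
    have hRsub : R ⊆ D₁ := by
      rw [← hroot D₁ hD₁ D₂ hD₂ hne12]; exact Set.inter_subset_left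
    have hRfin : R.Finite := (hsizes D₁ (hTsub hD₁)).1.subset hRsub
    have hRlt : ∀ x ∈ R, x.2 < κ.ord := by
      intro x hx
      obtain ⟨⟨p₀, _, rfl⟩, _⟩ := hTsub hD₁
      exact hdomlt p₀ x (hRsub hx)
    obtain ⟨α₀, hα₀, hbound⟩ := auxBound (hRfin.image Prod.snd) hord
      (by rintro _ ⟨x, hx, rfl⟩; exact hRlt x hx)
    have hα : Cardinal.lift.{1} α₀.card < c := by
      rw [hcdef]; exact Cardinal.lift_lt.2 (Cardinal.lt_ord.1 hα₀)
    -- choose representatives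
    have hpick : ∀ D : ↥T, ∃ p : LevyCond κ.ord, p ∈ A ∧ dom p = D.1 :=
      fun D => (hTsub D.2).1
    choose pick hpickA hpickdom using hpick
    have hρmem : ∀ D : ↥T, {t ∈ (pick D).1 | (t.1, t.2.1) ∈ R} ∈
        {q : Set (ℕ × Ordinal.{0} × Ordinal.{0}) |
          ∀ t ∈ q, (t.1, t.2.1) ∈ R ∧ t.2.2 < α₀} := by
      intro D t ht
      refine ⟨ht.2, ?_⟩
      have h1 := (pick D).2.2.1 t ht.1
      exact h1.1.trans (hbound t.2.1 ⟨(t.1, t.2.1), ht.2, rfl⟩)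
    have hninj : ¬ Function.Injective (fun D : ↥T =>
        (⟨{t ∈ (pick D).1 | (t.1, t.2.1) ∈ R}, hρmem D⟩ :
          ↥{q : Set (ℕ × Ordinal.{0} × Ordinal.{0}) |
            ∀ t ∈ q, (t.1, t.2.1) ∈ R ∧ t.2.2 < α₀})) := by
      intro hinj
      exact absurd (hTcard.trans (Cardinal.mk_le_of_injective hinj))
        (not_le.2 (auxCount hω hsl hRfin hα))
    rw [Function.not_injective_iff] at hninj
    obtain ⟨E₁, E₂, hρeq, hEne⟩ := hninj
    have hρeq' : {t ∈ (pick E₁).1 | (t.1, t.2.1) ∈ R}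
        = {t ∈ (pick E₂).1 | (t.1, t.2.1) ∈ R} := congrArg Subtype.val hρeq
    have hpq : pick E₁ ≠ pick E₂ := by
      intro h
      exact hEne (Subtype.ext (by rw [← hpickdom E₁, ← hpickdom E₂, h]))
    apply hA (pick E₁) (hpickA E₁) (pick E₂) (hpickA E₂) hpq
    have hcross : ∀ t ∈ (pick E₁).1, ∀ t' ∈ (pick E₂).1,
        t.1 = t'.1 → t.2.1 = t'.2.1 → t ∈ (pick E₂).1 := by
      intro t ht t' ht' h1 h2
      have hkey : (t.1, t.2.1) ∈ R := by
        rw [← hroot E₁.1 E₁.2 E₂.1 E₂.2 (fun h => hEne (Subtype.ext h))]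
        constructor
        · rw [← hpickdom E₁]; exact ⟨t, ht, rfl⟩
        · rw [← hpickdom E₂]
          exact ⟨t', ht', by simp [h1, h2]⟩
      have hmem : t ∈ {t ∈ (pick E₂).1 | (t.1, t.2.1) ∈ R} := by
        rw [← hρeq']; exact ⟨ht, hkey⟩
      exact hmem.1
    have hfunc : ∀ t ∈ (pick E₁).1 ∪ (pick E₂).1, ∀ t' ∈ (pick E₁).1 ∪ (pick E₂).1,
        t.1 = t'.1 → t.2.1 = t'.2.1 → t = t' := by
      intro t ht t' ht' h1 h2
      rcases ht with ht | ht <;> rcases ht' with ht' | ht'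
      · exact (pick E₁).2.2.2 t ht t' ht' h1 h2
      · exact (pick E₂).2.2.2 t (hcross t ht t' ht' h1 h2) t' ht' h1 h2
      · exact (pick E₂).2.2.2 t ht t' (hcross t' ht' t ht h1.symm h2.symm) h1 h2
      · exact (pick E₂).2.2.2 t ht t' ht' h1 h2
    refine ⟨⟨(pick E₁).1 ∪ (pick E₂).1, (pick E₁).2.1.union (pick E₂).2.1, ?_, hfunc⟩,
      Set.subset_union_left, Set.subset_union_right⟩
    intro t ht
    rcases ht with ht | ht
    exacts [(pick E₁).2.2.1 t ht, (pick E₂).2.2.1 t ht]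
  refine ⟨part1, fun A hA _ => ?_⟩
  have hAlt : #↥A < c := part1 A hA
  set s : Set Ordinal.{0} := ⋃ p ∈ A, (fun t => t.2.1) '' p.1 with hsdef
  have hslt : #↥s < c := by
    rw [hsdef]
    rw [card_biUnion_lt_iff_forall_of_isRegular hreg hAlt]
    intro p _
    exact ((p.2.1.image _).lt_aleph0).trans hω
  have hsbd : ∀ x ∈ s, x < κ.ord := by
    intro x hx
    rw [hsdef] at hx
    simp only [Set.mem_iUnion] at hx
    obtain ⟨p, hp, t, ht, rfl⟩ := hx
    exact (p.2.2.1 t ht).2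
  rw [hcdef] at hslt
  obtain ⟨μ, hμ, hμeq⟩ := Cardinal.lt_lift_iff.1 hslt
  have hequiv : Nonempty (μ.out ≃ ↥s) :=
    Cardinal.lift_mk_eq'.1 (by simp [Cardinal.mk_out, hμeq])
  obtain ⟨e⟩ := hequiv
  have hflt : ∀ i : μ.out, Order.succ (e i).1 < κ.ord :=
    fun i => hord.succ_lt (hsbd _ (e i).2)
  have hι : #μ.out < κ.ord.cof := by
    rw [hreg0.cof_eq, Cardinal.mk_out]; exact hμ
  refine ⟨⨆ i, Order.succ (e i).1, Ordinal.iSup_lt_ord hι hflt, ?_⟩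
  intro p hp t ht
  have hx : t.2.1 ∈ s := by
    rw [hsdef]
    exact Set.mem_biUnion hp ⟨t, ht, rfl⟩
  have hle : Order.succ t.2.1 ≤ ⨆ i, Order.succ (e i).1 := by
    have := Ordinal.le_iSup (fun i => Order.succ (e i).1) (e.symm ⟨t.2.1, hx⟩)
    simpa using this
  exact lt_of_lt_of_le (Order.lt_succ _) hle
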